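/- Let m ∈ (0,1) be irrational. Define f : ℝ² → ℝ by f(x,y) = (x + m·y)/√(1 + m²) (the coordinate of the orthogonal projection onto the line y = m·x), and let Γ := {(p,q) ∈ ℤ² : q ≥ m·p and there exist a ∈ {p−1, p} and b ∈ {q−1, q} with m·a ≤ b + 1 and m·(a+1) ≥ b} (the lattice points lying on or above the line y = m·x that are vertices of a unit cell of ℤ² meeting that line). Then the set S := f(Γ) ⊆ ℝ is not periodic: there is no real τ ≠ 0 with {s + τ : s ∈ S} = S. -/

import Mathlib

private lemma irr_key {m : ℝ} (hirr : Irrational m) {a b : ℤ}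
    (h : m * (a : ℝ) = (b : ℝ)) : a = 0 ∧ b = 0 := by
  by_cases ha : a = 0
  · subst ha; simp at h
    constructor
    · rfl
    · exact_mod_cast h.symm
  · exfalso
    have haR : (a : ℝ) ≠ 0 := Int.cast_ne_zero.mpr ha
    have : m = ((b / a : ℚ) : ℝ) := by
      push_cast
      field_simp
      linarith [h]
    exact hirr ⟨b / a, this.symm⟩

/-- Cut-and-project: for an irrational slope `m ∈ (0,1)`, the projection onto the line
`y = m·x` of the upper vertices of the lattice cells meeting the line is not periodic. -/
theorem stmt1 (m : ℝ) (hm0 : 0 < m) (hm1 : m < 1) (hirr : Irrational m)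
    (f : ℝ → ℝ → ℝ) (hf : ∀ x y : ℝ, f x y = (x + m * y) / Real.sqrt (1 + m ^ 2))
    (Γ : Set (ℤ × ℤ))
    (hΓ : Γ = {pq : ℤ × ℤ | m * (pq.1 : ℝ) ≤ (pq.2 : ℝ) ∧
      ∃ a ∈ ({pq.1 - 1, pq.1} : Set ℤ), ∃ b ∈ ({pq.2 - 1, pq.2} : Set ℤ),
        m * (a : ℝ) ≤ (b : ℝ) + 1 ∧ (b : ℝ) ≤ m * ((a : ℝ) + 1)})
    (S : Set ℝ) (hS : S = (fun pq : ℤ × ℤ => f (pq.1 : ℝ) (pq.2 : ℝ)) '' Γ) :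
    ¬ ∃ τ : ℝ, τ ≠ 0 ∧ (fun s => s + τ) '' S = S := by
  rintro ⟨τ, hτ, himg⟩
  set c := Real.sqrt (1 + m ^ 2) with hc
  have hcpos : 0 < c := Real.sqrt_pos.mpr (by positivity)
  -- closure under ± τ
  have memS : ∀ s ∈ S, s + τ ∈ S := fun s hs => himg ▸ ⟨s, hs, rfl⟩
  have memS' : ∀ s ∈ S, s - τ ∈ S := by
    intro s hs
    rw [← himg] at hs
    obtain ⟨t, ht, h⟩ := hs
    simp only at h
    have : s - τ = t := by linarith
    rwa [this]
  -- 0 ∈ S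
  have h0 : (0 : ℝ) ∈ S := by
    rw [hS]
    refine ⟨(0, 0), ?_, ?_⟩
    · rw [hΓ]
      refine ⟨by norm_num, 0, by simp, 0, by simp, by norm_num, by norm_num; linarith⟩
    · simp [hf]
  -- n τ ∈ S for all n
  have hn : ∀ n : ℤ, (n : ℝ) * τ ∈ S := by
    intro n
    induction n using Int.induction_on with
    | zero => simpa using h0
    | succ k ih =>
        have h2 := memS _ ih
        have he : (((k : ℤ) + 1 : ℤ) : ℝ) * τ = ((k : ℤ) : ℝ) * τ + τ := by
          push_cast; ring
        rw [he]; exact h2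
    | pred k ih =>
        have h2 := memS' _ ih
        have he : ((-(k : ℤ) - 1 : ℤ) : ℝ) * τ = ((-(k : ℤ) : ℤ) : ℝ) * τ - τ := by
          push_cast; ring
        rw [he]; exact h2
  -- representation of elements of S
  have hrep : ∀ s ∈ S, ∃ p q : ℤ, (p : ℝ) + m * q = s * c ∧
      0 ≤ (q : ℝ) - m * p ∧ (q : ℝ) - m * p ≤ m + 1 := by
    intro s hs
    rw [hS] at hs
    obtain ⟨⟨p, q⟩, hpq, hfeq⟩ := hs
    rw [hΓ] at hpq
    obtain ⟨hlow, a, ha, b, hb, hab1, hab2⟩ := hpq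
    simp only at hfeq hlow
    rw [hf] at hfeq
    refine ⟨p, q, ?_, by linarith, ?_⟩
    · field_simp at hfeq
      linarith [hfeq]
    · simp only [Set.mem_insert_iff, Set.mem_singleton_iff] at ha hb
      have haP : (a : ℝ) ≤ (p : ℝ) := by
        rcases ha with h | h <;> subst h <;> push_cast <;> linarith
      have hbQ : (q : ℝ) - 1 ≤ (b : ℝ) := by
        rcases hb with h | h <;> subst h <;> push_cast <;> linarith
      nlinarith [hab2, haP, hbQ, hm0.le]
  -- representation of τ
  obtain ⟨p₁, q₁, he1, hd0, hd1⟩ := hrep _ (by simpa using hn 1)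
  set d : ℝ := (q₁ : ℝ) - m * p₁ with hd
  have hdne : d ≠ 0 := by
    intro h
    have : m * (p₁ : ℝ) = (q₁ : ℝ) := by rw [hd] at h; linarith
    obtain ⟨hp0, hq0⟩ := irr_key hirr this
    rw [hp0, hq0] at he1
    simp at he1
    rcases he1 with h | h
    · exact hτ h
    · linarith
  have hdpos : 0 < d := lt_of_le_of_ne hd0 (Ne.symm hdne)
  -- choose big N
  obtain ⟨N, hN⟩ := exists_nat_gt ((m + 1) / d)
  have hNd : m + 1 < (N : ℝ) * d := by
    rw [div_lt_iff₀ hdpos] at hN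
    linarith
  obtain ⟨p, q, he, _, hub⟩ := hrep _ (hn (N : ℤ))
  have key : (p : ℝ) - N * p₁ = m * ((N : ℝ) * q₁ - q) := by
    have : (p : ℝ) + m * q = (N : ℝ) * ((p₁ : ℝ) + m * q₁) := by
      rw [he1]
      push_cast at he ⊢
      rw [he]; ring
    nlinarith [this]
  have key' : m * (((N : ℤ) * q₁ - q : ℤ) : ℝ) = ((p - (N : ℤ) * p₁ : ℤ) : ℝ) := by
    push_cast
    linarith [key]
  obtain ⟨hA, hB⟩ := irr_key hirr key'
  have hq : (q : ℝ) = (N : ℝ) * q₁ := by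
    have : ((N : ℤ) * q₁ : ℤ) = q := by linarith [hA]
    exact_mod_cast (by exact_mod_cast this.symm)
  have hp : (p : ℝ) = (N : ℝ) * p₁ := by
    have : (p : ℤ) = (N : ℤ) * p₁ := by linarith [hB]
    exact_mod_cast this
  rw [hq, hp] at hub
  have : (q : ℝ) - m * p = (N:ℝ) * d := by rw [hq, hp, hd]; ring
  nlinarith [hub, hNd]
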